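/- Let H₁, H₂ be Hilbert spaces, a ∈ B(H₁, H₂), and b an injective selfadjoint (possibly unbounded) operator on H₂ commuting with aa* such that Im a ⊆ D(b). Set c := b ∘ a (a bounded operator H₁ → H₂). Then a*c and ac* are selfadjoint, ker a = ker c, and ker a* = ker c*. -/

import Mathlib

/-- Converse of the factorization lemma: if `b` is an injective
selfadjoint (possibly unbounded) operator on `H₂` commuting with `aa*`
(`aa* b ⊆ b aa*`), `Im a ⊆ D(b)`, and `c = b ∘ a` is a bounded operator, then
`a*c` and `ac*` are selfadjoint, `ker a = ker c` and `ker a* = ker c*`. -/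
theorem stmt2 {H₁ H₂ : Type*}
    [NormedAddCommGroup H₁] [InnerProductSpace ℂ H₁] [CompleteSpace H₁]
    [NormedAddCommGroup H₂] [InnerProductSpace ℂ H₂] [CompleteSpace H₂]
    (a c : H₁ →L[ℂ] H₂) (b : H₂ →ₗ.[ℂ] H₂)
    (hsa : IsSelfAdjoint b)
    (hinj : ∀ ξ : b.domain, b ξ = 0 → (ξ : H₂) = 0)
    (hcomm : ∀ ξ : b.domain,
      ∃ h : (a ∘L ContinuousLinearMap.adjoint a) (ξ : H₂) ∈ b.domain,
        b ⟨(a ∘L ContinuousLinearMap.adjoint a) (ξ : H₂), h⟩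
          = (a ∘L ContinuousLinearMap.adjoint a) (b ξ))
    (hmem : ∀ ζ : H₁, a ζ ∈ b.domain)
    (hc : ∀ ζ : H₁, c ζ = b ⟨a ζ, hmem ζ⟩) :
    IsSelfAdjoint (ContinuousLinearMap.adjoint a ∘L c) ∧
    IsSelfAdjoint (a ∘L ContinuousLinearMap.adjoint c) ∧
    LinearMap.ker (a : H₁ →ₗ[ℂ] H₂) = LinearMap.ker (c : H₁ →ₗ[ℂ] H₂) ∧
    LinearMap.ker (ContinuousLinearMap.adjoint a : H₂ →ₗ[ℂ] H₁)
      = LinearMap.ker (ContinuousLinearMap.adjoint c : H₂ →ₗ[ℂ] H₁) := by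
  have hdense : Dense (b.domain : Set H₂) := hsa.dense_domain
  -- symmetry of b
  have hsymm : ∀ x y : b.domain, (inner ℂ (b x) (y : H₂) : ℂ) = inner ℂ (x : H₂) (b y) := by
    have h := LinearPMap.adjoint_isFormalAdjoint hdense
    rw [LinearPMap.isSelfAdjoint_def] at hsa
    rw [hsa] at h
    exact h
  -- c vanishes on ker a
  have hczero : ∀ ζ : H₁, a ζ = 0 → c ζ = 0 := by
    intro ζ hζ
    rw [hc ζ]
    have : (⟨a ζ, hmem ζ⟩ : b.domain) = 0 := Subtype.ext hζ
    rw [this]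
    exact b.map_zero
  set a' := ContinuousLinearMap.adjoint a with ha'
  set S := c ∘L a' with hSdef
  -- symmetry of S = c a* = b a a*
  have hsymS : ∀ ξ η : H₂, (inner ℂ (S ξ) η : ℂ) = inner ℂ ξ (S η) := by
    intro ξ
    have key : ∀ η ∈ (b.domain : Set H₂), (inner ℂ (S ξ) η : ℂ) = inner ℂ ξ (S η) := by
      intro η hη
      set η' : b.domain := ⟨η, hη⟩ with hη'
      obtain ⟨h1, h2⟩ := hcomm η'
      have hSξ : S ξ = b ⟨a (a' ξ), hmem (a' ξ)⟩ := by
        simp only [hSdef, ContinuousLinearMap.comp_apply]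
        exact hc (a' ξ)
      have hSη : S η = b ⟨(a ∘L a') (η : H₂), h1⟩ := by
        simp only [hSdef, ContinuousLinearMap.comp_apply]
        rw [hc (a' η)]
      calc (inner ℂ (S ξ) η : ℂ)
          = inner ℂ (b ⟨a (a' ξ), hmem (a' ξ)⟩) (η' : H₂) := by rw [hSξ]
        _ = inner ℂ (a (a' ξ)) (b η') := hsymm _ _
        _ = inner ℂ (a' ξ) (a' (b η')) := by
            rw [← ContinuousLinearMap.adjoint_inner_right]
        _ = inner ℂ ξ (a (a' (b η'))) := ContinuousLinearMap.adjoint_inner_left a (a' (b η')) ξ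
        _ = inner ℂ ξ ((a ∘L a') (b η')) := rfl
        _ = inner ℂ ξ (b ⟨(a ∘L a') (η : H₂), h1⟩) := by rw [h2]
        _ = inner ℂ ξ (S η) := by rw [hSη]
    intro η
    have hf : Continuous fun η : H₂ => (inner ℂ (S ξ) η : ℂ) := continuous_const.inner continuous_id
    have hg : Continuous fun η : H₂ => (inner ℂ ξ (S η) : ℂ) := continuous_const.inner S.continuous
    exact congrFun (hf.ext_on hdense hg key) η
  have hS : IsSelfAdjoint S :=
    ContinuousLinearMap.isSelfAdjoint_iff_isSymmetric.mpr fun x y => hsymS x y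
  -- S η = 0 when a* η = 0
  have hSzero : ∀ η : H₂, a' η = 0 → S η = 0 := by
    intro η hη
    simp only [hSdef, ContinuousLinearMap.comp_apply, hη, map_zero]
  refine ⟨?_, ?_, ?_, ?_⟩
  · -- a* c selfadjoint
    refine ContinuousLinearMap.isSelfAdjoint_iff_isSymmetric.mpr fun ξ η => ?_
    have : ∀ ζ₁ ζ₂ : H₁, (inner ℂ (c ζ₁) (a ζ₂) : ℂ) = inner ℂ (a ζ₁) (c ζ₂) := by
      intro ζ₁ ζ₂
      rw [hc ζ₁, hc ζ₂]
      exact hsymm ⟨a ζ₁, hmem ζ₁⟩ ⟨a ζ₂, hmem ζ₂⟩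
    calc (inner ℂ ((ContinuousLinearMap.adjoint a ∘L c) ξ) η : ℂ)
        = inner ℂ (c ξ) (a η) := by
          rw [ContinuousLinearMap.comp_apply, ContinuousLinearMap.adjoint_inner_left]
      _ = inner ℂ (a ξ) (c η) := this ξ η
      _ = inner ℂ ξ ((ContinuousLinearMap.adjoint a ∘L c) η) := by
          rw [ContinuousLinearMap.comp_apply, ContinuousLinearMap.adjoint_inner_right]
  · -- a c* selfadjoint : a c* = S* = S
    have : a ∘L ContinuousLinearMap.adjoint c = ContinuousLinearMap.adjoint S := by
      rw [hSdef, ContinuousLinearMap.adjoint_comp, ha', ContinuousLinearMap.adjoint_adjoint]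
    rw [this, ContinuousLinearMap.isSelfAdjoint_iff'] at *
    rw [ContinuousLinearMap.adjoint_adjoint]
    exact (ContinuousLinearMap.isSelfAdjoint_iff'.mp hS).symm
  · -- ker a = ker c
    ext ζ
    simp only [LinearMap.mem_ker, ContinuousLinearMap.coe_coe]
    constructor
    · exact hczero ζ
    · intro hζ
      apply hinj ⟨a ζ, hmem ζ⟩
      rw [← hc ζ]; exact hζ
  · -- ker a* = ker c*
    ext η
    simp only [LinearMap.mem_ker, ContinuousLinearMap.coe_coe]
    constructor
    · -- a* η = 0 → c* η = 0
      intro hη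
      set v := ContinuousLinearMap.adjoint c η with hv
      have hv_inner : ∀ ζ : H₁, (inner ℂ v ζ : ℂ) = inner ℂ η (c ζ) := fun ζ =>
        ContinuousLinearMap.adjoint_inner_left c ζ η
      -- v ⊥ ker a
      have hv_ker : ∀ w : H₁, a w = 0 → (inner ℂ v w : ℂ) = 0 := by
        intro w hw
        rw [hv_inner w, hczero w hw, inner_zero_right]
      -- v ⊥ range a*
      have hv_ran : ∀ ξ : H₂, (inner ℂ v (a' ξ) : ℂ) = 0 := by
        intro ξ
        rw [hv_inner (a' ξ)]
        have : c (a' ξ) = S ξ := rfl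
        rw [this, ← hsymS η ξ, hSzero η hη, inner_zero_left]
      -- hence a v = 0
      have hav : a v = 0 := by
        apply ext_inner_right ℂ
        intro ξ
        rw [← ContinuousLinearMap.adjoint_inner_right, inner_zero_left]
        exact hv_ran ξ
      have : (inner ℂ v v : ℂ) = 0 := hv_ker v hav
      exact inner_self_eq_zero.mp this
    · -- c* η = 0 → a* η = 0
      intro hη
      have horth : ∀ ζ : H₁, (inner ℂ η (c ζ) : ℂ) = 0 := by
        intro ζ
        rw [← ContinuousLinearMap.adjoint_inner_left, hη, inner_zero_left]
      have hSη : S η = 0 := by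
        have h1 : (inner ℂ (S η) (S η) : ℂ) = inner ℂ η (S (S η)) := hsymS η (S η)
        have h2 : S (S η) = c (a' (S η)) := rfl
        rw [h2, horth (a' (S η))] at h1
        exact inner_self_eq_zero.mp h1
      have haa : a (a' η) = 0 := by
        apply hinj ⟨a (a' η), hmem (a' η)⟩
        rw [← hc (a' η)]
        have : c (a' η) = S η := rfl
        rw [this, hSη]
      have h3 : (inner ℂ (a' η) (a' η) : ℂ) = inner ℂ η (a (a' η)) :=
        ContinuousLinearMap.adjoint_inner_left a (a' η) η
      rw [haa, inner_zero_right] at h3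
      exact inner_self_eq_zero.mp h3
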